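/- For every n ≥ 1, every word d₁…d_n ∈ Ω_{σ₁…σ_n}, and every a ∈ ℝ, the level-n square Φ^{σ₁…σ_n}_{d₁…d_n}(F₀) meets the line L_a if and only if Φ^{σ₁…σ_n}_{d₁…d_n}(F_σ) meets L_a. -/

import Mathlib

open Set Filter

noncomputable section

/-- The digit set Ω₀. -/
def Dig0 : Finset (ℤ × ℤ) := {(0,0),(0,1),(0,2),(1,0),(1,2),(2,0),(2,1),(2,2)}

/-- The digit set Ω₁. -/
def Dig1 : Finset (ℤ × ℤ) :=
  {(0,0),(0,1),(0,2),(0,3),(1,0),(1,3),(2,0),(2,1),(3,0),(3,1),(3,2),(3,3)}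

/-- Ω indexed by a boolean (false = Ω₀, true = Ω₁). -/
def DigB : Bool → Finset (ℤ × ℤ)
  | false => Dig0
  | true => Dig1

/-- The contraction ratio denominator: 3 for the 0-system, 4 for the 1-system. -/
def ratioB : Bool → ℝ
  | false => 3
  | true => 4

/-- Maximal digit for the symbolic space: 2 when σ_i = 0, 3 when σ_i = 1. -/
def capB : Bool → ℕ
  | false => 2
  | true => 3

/-- The maps Φ⁰_d (b = false) and Φ¹_d (b = true). -/
def Phi (b : Bool) (d : ℤ × ℤ) (p : ℝ × ℝ) : ℝ × ℝ :=
  ((p.1 + (d.1 : ℝ)) / ratioB b, (p.2 + (d.2 : ℝ)) / ratioB b)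

/-- `cnt σ b k` = number of indices among the first k with σ-value b (i.e. n₀(k), n₁(k)). -/
def cnt (σ : ℕ → Bool) (b : Bool) (k : ℕ) : ℕ :=
  ((Finset.range k).filter (fun i => σ i = b)).card

/-- The scale 3^{n₀(k)}·4^{n₁(k)}. -/
def sc (σ : ℕ → Bool) (k : ℕ) : ℝ := 3 ^ cnt σ false k * 4 ^ cnt σ true k

/-- The unit square F₀ = [0,1]². -/
def F0set : Set (ℝ × ℝ) := Set.Icc (0:ℝ) 1 ×ˢ Set.Icc (0:ℝ) 1

/-- The sets F_j of the Moran construction (σ j is the paper's σ_{j+1}). -/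
def Fiter (σ : ℕ → Bool) : ℕ → Set (ℝ × ℝ)
  | 0 => F0set
  | j + 1 => ⋃ d ∈ DigB (σ j), Phi (σ j) d '' Fiter σ j

/-- The Sierpinski carpet with Moran structure F_σ = ⋂_{j ≥ 1} F_j. -/
def FMoran (σ : ℕ → Bool) : Set (ℝ × ℝ) := ⋂ j : ℕ, Fiter σ (j + 1)

/-- The line L_a : y = (M/N)x + a. -/
def Lline (M N : ℕ) (a : ℝ) : Set (ℝ × ℝ) := {p | p.2 = (M : ℝ) / (N : ℝ) * p.1 + a}

/-- The interval J = [-M/N, 1]. -/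
def Jset (M N : ℕ) : Set ℝ := Set.Icc (-(M : ℝ) / (N : ℝ)) 1

/-- The expanding maps T⁰_d (b = false) and T¹_d (b = true). -/
def Tmap (M N : ℕ) (b : Bool) (d : ℤ × ℤ) (x : ℝ) : ℝ :=
  ratioB b * x + (d.1 : ℝ) * ((M : ℝ) / (N : ℝ)) - (d.2 : ℝ)

/-- The contracting maps S⁰_d (b = false) and S¹_d (b = true), inverses of T. -/
def Smap (M N : ℕ) (b : Bool) (d : ℤ × ℤ) (x : ℝ) : ℝ :=
  (x - (d.1 : ℝ) * ((M : ℝ) / (N : ℝ)) + (d.2 : ℝ)) / ratioB b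

/-- Composition Φ^{σ₁…σ_n}_{d₁…d_n} = Φ^{σ₁}_{d₁} ∘ ⋯ ∘ Φ^{σ_n}_{d_n}. -/
def PhiComp (σ : ℕ → Bool) {n : ℕ} (w : Fin n → ℤ × ℤ) : ℝ × ℝ → ℝ × ℝ :=
  (List.ofFn (fun i : Fin n => Phi (σ i.1) (w i))).foldr (· ∘ ·) id

/-- Composition S^{σ₁…σ_n}_{d₁…d_n} = S^{σ₁}_{d₁} ∘ ⋯ ∘ S^{σ_n}_{d_n}. -/
def Scomp (M N : ℕ) (σ : ℕ → Bool) {n : ℕ} (w : Fin n → ℤ × ℤ) : ℝ → ℝ :=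
  (List.ofFn (fun i : Fin n => Smap M N (σ i.1) (w i))).foldr (· ∘ ·) id

/-- Composition T^{σ₁…σ_n}_{d₁…d_n} = T^{σ_n}_{d_n} ∘ ⋯ ∘ T^{σ₁}_{d₁}. -/
def Tcomp (M N : ℕ) (σ : ℕ → Bool) {n : ℕ} (w : Fin n → ℤ × ℤ) : ℝ → ℝ :=
  (List.ofFn (fun i : Fin n => Tmap M N (σ i.1) (w i))).foldl (fun g f => f ∘ g) id

/-- N_n^σ(a): the number of admissible words of length n whose level-n square meets L_a. -/
def Ncount (M N : ℕ) (σ : ℕ → Bool) (n : ℕ) (a : ℝ) : ℕ :=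
  Set.ncard {w : Fin n → ℤ × ℤ |
    (∀ i, w i ∈ DigB (σ i.1)) ∧ (PhiComp σ w '' F0set ∩ Lline M N a).Nonempty}

/-- Γ_x = {x + i/N : i ∈ ℤ} ∩ J. -/
def GammaSet (M N : ℕ) (x : ℝ) : Set ℝ :=
  {y | (∃ i : ℤ, y = x + (i : ℝ) / (N : ℝ)) ∧ y ∈ Jset M N}

/-- The matrix A₀^j (1-based indices p, q correspond to the Fin values plus one). -/
def A0mat (M N : ℕ) (j : ℕ) : Matrix (Fin (N + M)) (Fin (N + M)) ℝ :=
  Matrix.of fun p q =>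
    ((Dig0.filter (fun d => d.1 * (M : ℤ) - d.2 * (N : ℤ) =
        2 * (M : ℤ) + 2 + ((q : ℕ) + 1 : ℤ) - 3 * ((p : ℕ) + 1 : ℤ) - (j : ℤ))).card : ℝ)

/-- The matrix A₁^j. -/
def A1mat (M N : ℕ) (j : ℕ) : Matrix (Fin (N + M)) (Fin (N + M)) ℝ :=
  Matrix.of fun p q =>
    ((Dig1.filter (fun d => d.1 * (M : ℤ) - d.2 * (N : ℤ) =
        3 * (M : ℤ) + 3 + ((q : ℕ) + 1 : ℤ) - 4 * ((p : ℕ) + 1 : ℤ) - (j : ℤ))).card : ℝ)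

/-- A^j_b : A₀^j when b = false, A₁^j when b = true. -/
def Amat (M N : ℕ) : Bool → ℕ → Matrix (Fin (N + M)) (Fin (N + M)) ℝ
  | false => A0mat M N
  | true => A1mat M N

/-- The ordered matrix product A^{ξ₁}_{σ₁} A^{ξ₂}_{σ₂} ⋯ A^{ξ_k}_{σ_k}. -/
def Aprod (M N : ℕ) (σ : ℕ → Bool) (ξ : ℕ → ℕ) (k : ℕ) :
    Matrix (Fin (N + M)) (Fin (N + M)) ℝ :=
  ((List.range k).map (fun i => Amat M N (σ i) (ξ i))).prod

/-- The matrix B_b(x), built from a chosen increasing enumeration Γe of the sets Γ_x. -/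
def Bmat (M N : ℕ) (Γe : ℝ → Fin (N + M) → ℝ) (b : Bool) (x : ℝ) :
    Matrix (Fin (N + M)) (Fin (N + M)) ℝ :=
  Matrix.of fun p q =>
    (Set.ncard {d : ℤ × ℤ | d ∈ DigB b ∧ Tmap M N b d (Γe x p) = Γe (ratioB b * x) q} : ℝ)

/-- ‖X‖: the sum of all entries of a matrix. -/
def mnorm {n : ℕ} (X : Matrix (Fin n) (Fin n) ℝ) : ℝ := ∑ p, ∑ q, X p q

/-- The least number of sets of diameter at most δ needed to cover E. -/
def coverNum (E : Set (ℝ × ℝ)) (δ : ℝ) : ℕ :=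
  sInf {n : ℕ | ∃ S : Finset (Set (ℝ × ℝ)), S.card = n ∧
    (∀ s ∈ S, EMetric.diam s ≤ ENNReal.ofReal δ) ∧ E ⊆ ⋃ s ∈ S, s}

/-- The upper box dimension. -/
def uboxDim (E : Set (ℝ × ℝ)) : ℝ :=
  limsup (fun δ : ℝ => Real.log (coverNum E δ : ℝ) / (-Real.log δ))
    (nhdsWithin (0 : ℝ) (Set.Ioi 0))

/-- The lower box dimension. -/
def lboxDim (E : Set (ℝ × ℝ)) : ℝ :=
  liminf (fun δ : ℝ => Real.log (coverNum E δ : ℝ) / (-Real.log δ))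
    (nhdsWithin (0 : ℝ) (Set.Ioi 0))

/-- The finite words Σ_σ^k. -/
def wordsF (σ : ℕ → Bool) (k : ℕ) : Finset (Fin k → ℕ) :=
  Fintype.piFinset fun i => Finset.range (capB (σ i.1) + 1)

/-- A_ω for a finite word ω ∈ Σ_σ^k. -/
def AprodW (M N : ℕ) (σ : ℕ → Bool) {k : ℕ} (ω : Fin k → ℕ) :
    Matrix (Fin (N + M)) (Fin (N + M)) ℝ :=
  (List.ofFn (fun i : Fin k => Amat M N (σ i.1) (ω i))).prod

/-- The pressure function P_A(q). -/
def PA (M N : ℕ) (σ : ℕ → Bool) (q : ℝ) : ℝ :=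
  limsup (fun k : ℕ =>
    Real.log (∑ ω ∈ wordsF σ k, mnorm (AprodW M N σ ω) ^ q) / (k : ℝ)) atTop

/-- The level set E(α) of intercepts whose box-dimension limit equals α. -/
def Eset (M N : ℕ) (σ : ℕ → Bool) (α : ℝ) : Set ℝ :=
  {a | a ∈ Jset M N ∧ (∀ k : ℕ, ¬∃ m : ℤ, sc σ k * (N : ℝ) * a = (m : ℝ)) ∧
    ∃ κ : ℕ, (1 ≤ κ ∧ κ ≤ N + M) ∧ ∃ ξ : ℕ → ℕ, (∀ i, ξ i ≤ capB (σ i)) ∧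
      a = (-(M : ℝ) - 1 + (κ : ℝ)) / (N : ℝ) +
          1 / (N : ℝ) * ∑' i : ℕ, (ξ i : ℝ) / sc σ (i + 1) ∧
      Tendsto (fun k : ℕ => Real.log (mnorm (Aprod M N σ ξ k)) /
        ((cnt σ false k : ℝ) * Real.log 3 + (cnt σ true k : ℝ) * Real.log 4))
        atTop (nhds α)}
/-- The left and bottom edges of the unit square. -/
def Bedge : Set (ℝ × ℝ) :=
  {p | (p.1 = 0 ∧ p.2 ∈ Set.Icc (0:ℝ) 1) ∨ (p.2 = 0 ∧ p.1 ∈ Set.Icc (0:ℝ) 1)}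

lemma ratioB_pos (b : Bool) : 0 < ratioB b := by cases b <;> norm_num [ratioB]

lemma exists_digit (r : ℤ) (hr : 1 ≤ r) (y : ℝ) (h0 : 0 ≤ y) (h1 : y ≤ 1) :
    ∃ k : ℤ, 0 ≤ k ∧ k ≤ r - 1 ∧ 0 ≤ (r:ℝ) * y - k ∧ (r:ℝ) * y - k ≤ 1 := by
  have hr' : (0:ℝ) ≤ (r:ℝ) := by exact_mod_cast (by omega : (0:ℤ) ≤ r)
  refine ⟨min ⌊(r:ℝ) * y⌋ (r - 1), ?_, min_le_right _ _, ?_, ?_⟩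
  · exact le_min (Int.floor_nonneg.2 (mul_nonneg hr' h0)) (by omega)
  · have : ((min ⌊(r:ℝ) * y⌋ (r - 1) : ℤ) : ℝ) ≤ (⌊(r:ℝ) * y⌋ : ℝ) := by
      exact_mod_cast min_le_left _ _
    have := Int.floor_le ((r:ℝ) * y)
    linarith
  · rcases le_total ⌊(r:ℝ) * y⌋ (r - 1) with h | h
    · rw [min_eq_left h]
      have := Int.lt_floor_add_one ((r:ℝ) * y)
      linarith
    · rw [min_eq_right h]
      have hry : (r:ℝ) * y ≤ (r:ℝ) := by nlinarith
      push_cast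
      linarith

lemma ratioB_eq (b : Bool) : ratioB b = ((if b then (4:ℤ) else 3 : ℤ) : ℝ) := by
  cases b <;> norm_num [ratioB]

lemma col_mem (b : Bool) (k : ℤ) (h0 : 0 ≤ k) (h1 : k ≤ (if b then (4:ℤ) else 3) - 1) :
    ((0, k) : ℤ × ℤ) ∈ DigB b := by
  cases b
  · norm_num at h1; interval_cases k <;> decide
  · norm_num at h1; interval_cases k <;> decide

lemma row_mem (b : Bool) (k : ℤ) (h0 : 0 ≤ k) (h1 : k ≤ (if b then (4:ℤ) else 3) - 1) :
    ((k, 0) : ℤ × ℤ) ∈ DigB b := by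
  cases b
  · norm_num at h1; interval_cases k <;> decide
  · norm_num at h1; interval_cases k <;> decide

lemma dig_bounds (b : Bool) {d : ℤ × ℤ} (hd : d ∈ DigB b) :
    0 ≤ d.1 ∧ (d.1 : ℝ) ≤ ratioB b - 1 ∧ 0 ≤ d.2 ∧ (d.2 : ℝ) ≤ ratioB b - 1 := by
  cases b <;> [fin_cases hd; fin_cases hd] <;> norm_num [ratioB]

lemma Bedge_subset_Fiter (σ : ℕ → Bool) : ∀ j, Bedge ⊆ Fiter σ j := by
  intro j
  induction j with
  | zero =>
    intro p hp
    rcases hp with ⟨h1, h2⟩ | ⟨h1, h2⟩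
    · exact ⟨by rw [h1]; exact ⟨le_refl 0, zero_le_one⟩, h2⟩
    · exact ⟨h2, by rw [h1]; exact ⟨le_refl 0, zero_le_one⟩⟩
  | succ j ih =>
    intro p hp
    set b := σ j with hb
    have hr : (1:ℤ) ≤ (if b then (4:ℤ) else 3) := by cases b <;> norm_num
    have hrpos : (0:ℝ) < ratioB b := ratioB_pos b
    rcases hp with ⟨h1, h2⟩ | ⟨h1, h2⟩
    · obtain ⟨k, hk0, hk1, hq0, hq1⟩ := exists_digit _ hr p.2 h2.1 h2.2
      rw [← ratioB_eq] at hq0 hq1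
      refine Set.mem_biUnion (col_mem b k hk0 hk1) ?_
      refine ⟨(0, ratioB b * p.2 - k), ih (Or.inl ⟨rfl, hq0, hq1⟩), ?_⟩
      simp only [Phi]
      have : p = (p.1, p.2) := rfl
      rw [this, h1]
      norm_num
      field_simp
      exact mul_div_cancel_left₀ _ hrpos.ne'
    · obtain ⟨k, hk0, hk1, hq0, hq1⟩ := exists_digit _ hr p.1 h2.1 h2.2
      rw [← ratioB_eq] at hq0 hq1
      refine Set.mem_biUnion (row_mem b k hk0 hk1) ?_
      refine ⟨(ratioB b * p.1 - k, 0), ih (Or.inr ⟨rfl, hq0, hq1⟩), ?_⟩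
      simp only [Phi]
      have : p = (p.1, p.2) := rfl
      rw [this, h1]
      norm_num
      field_simp
      exact mul_div_cancel_left₀ _ hrpos.ne'

lemma Bedge_subset_FMoran (σ : ℕ → Bool) : Bedge ⊆ FMoran σ :=
  Set.subset_iInter fun j => Bedge_subset_Fiter σ (j + 1)

lemma FMoran_subset_F0 (σ : ℕ → Bool) : FMoran σ ⊆ F0set := by
  intro p hp
  have h1 : p ∈ Fiter σ 1 := Set.mem_iInter.1 hp 0
  simp only [Fiter, Set.mem_iUnion] at h1
  obtain ⟨d, hd, q, hq, hpq⟩ := h1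
  obtain ⟨hd1, hd2, hd3, hd4⟩ := dig_bounds (σ 0) hd
  have hrpos : (0:ℝ) < ratioB (σ 0) := ratioB_pos (σ 0)
  have hd1' : (0:ℝ) ≤ (d.1 : ℝ) := by exact_mod_cast hd1
  have hd3' : (0:ℝ) ≤ (d.2 : ℝ) := by exact_mod_cast hd3
  obtain ⟨⟨hq1, hq2⟩, hq3, hq4⟩ := hq
  rw [← hpq]
  simp only [Phi]
  refine ⟨⟨div_nonneg (by linarith) hrpos.le, ?_⟩,
    div_nonneg (by linarith) hrpos.le, ?_⟩
  · rw [div_le_one hrpos]; linarith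
  · rw [div_le_one hrpos]; linarith

lemma line_meets_Bedge (M N : ℕ) (a : ℝ) (h : (F0set ∩ Lline M N a).Nonempty) :
    (Bedge ∩ Lline M N a).Nonempty := by
  obtain ⟨⟨x, y⟩, ⟨⟨hx0, hx1⟩, hy0, hy1⟩, hL⟩ := h
  simp only [Lline, Set.mem_setOf_eq] at hL
  set m : ℝ := (M : ℝ) / (N : ℝ) with hm
  have hm0 : 0 ≤ m := div_nonneg (Nat.cast_nonneg M) (Nat.cast_nonneg N)
  rcases le_or_gt 0 a with ha | ha
  · refine ⟨(0, a), Or.inl ⟨rfl, ha, ?_⟩, ?_⟩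
    · nlinarith
    · simp [Lline]
  · have hmx : 0 < m * x := by linarith
    have hm' : 0 < m := by nlinarith
    refine ⟨(-a / m, 0), Or.inr ⟨rfl, ?_, ?_⟩, ?_⟩
    · exact div_nonneg (neg_nonneg.2 ha.le) hm'.le
    · rw [div_le_one hm']
      nlinarith
    · simp only [Lline, Set.mem_setOf_eq]
      have hc : -a / m * m = -a := div_mul_cancel₀ _ hm'.ne'
      rw [mul_comm, hc]; ring
  
lemma phi_shape (σ : ℕ → Bool) : ∀ (n : ℕ) (σ' : ℕ → Bool) (w : Fin n → ℤ × ℤ),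
    ∃ ρ c₁ c₂ : ℝ, 0 < ρ ∧ ∀ p : ℝ × ℝ, PhiComp σ' w p = (p.1 / ρ + c₁, p.2 / ρ + c₂) := by
  intro n
  induction n with
  | zero =>
    intro σ' w
    exact ⟨1, 0, 0, one_pos, fun p => by simp [PhiComp]⟩
  | succ n ih =>
    intro σ' w
    obtain ⟨ρ, c₁, c₂, hρ, hf⟩ := ih (fun i => σ' (i + 1)) (fun i => w i.succ)
    set b := σ' 0 with hb
    have hr : 0 < ratioB b := ratioB_pos b
    refine ⟨ρ * ratioB b, (c₁ + (w 0).1) / ratioB b, (c₂ + (w 0).2) / ratioB b,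
      by positivity, fun p => ?_⟩
    have hcomp : PhiComp σ' w p =
        Phi b (w 0) (PhiComp (fun i => σ' (i + 1)) (fun i : Fin n => w i.succ) p) := by
      simp only [PhiComp, List.ofFn_succ, List.foldr_cons]
      rfl
    rw [hcomp, hf p]
    simp only [Phi, Prod.mk.injEq]
    constructor <;> · field_simp; ring

lemma image_line (M N : ℕ) (σ : ℕ → Bool) {n : ℕ} (w : Fin n → ℤ × ℤ) (a : ℝ) :
    ∃ a', ∀ S : Set (ℝ × ℝ),
      ((PhiComp σ w '' S ∩ Lline M N a).Nonempty ↔ (S ∩ Lline M N a').Nonempty) := by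
  obtain ⟨ρ, c₁, c₂, hρ, hf⟩ := phi_shape σ n σ w
  set m : ℝ := (M : ℝ) / (N : ℝ) with hm
  refine ⟨ρ * (m * c₁ + a - c₂), fun S => ⟨?_, ?_⟩⟩
  · rintro ⟨q, ⟨p, hpS, hpq⟩, hL⟩
    refine ⟨p, hpS, ?_⟩
    rw [hf p] at hpq
    simp only [Lline, Set.mem_setOf_eq] at hL ⊢
    rw [← hpq] at hL
    simp only at hL
    have hρ' : ρ ≠ 0 := ne_of_gt hρ
    have hinv : ρ * (1 / ρ) = 1 := mul_one_div_cancel hρ'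
    rw [← hm] at hL
    linear_combination ρ * hL - (p.2 - m * p.1) * hinv
  · rintro ⟨p, hpS, hL⟩
    refine ⟨PhiComp σ w p, ⟨p, hpS, rfl⟩, ?_⟩
    rw [hf p]
    simp only [Lline, Set.mem_setOf_eq] at hL ⊢
    have hρ' : ρ ≠ 0 := ne_of_gt hρ
    have hinv : ρ * (1 / ρ) = 1 := mul_one_div_cancel hρ'
    rw [← hm] at hL ⊢
    linear_combination (1 / ρ) * hL + (m * c₁ + a - c₂) * hinv

lemma F0_iff_FMoran (M N : ℕ) (σ : ℕ → Bool) (a : ℝ) :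
    (F0set ∩ Lline M N a).Nonempty ↔ (FMoran σ ∩ Lline M N a).Nonempty := by
  constructor
  · intro h
    obtain ⟨p, hp, hL⟩ := line_meets_Bedge M N a h
    exact ⟨p, Bedge_subset_FMoran σ hp, hL⟩
  · rintro ⟨p, hp, hL⟩
    exact ⟨p, FMoran_subset_F0 σ hp, hL⟩

/-- a level-n square meets L_a iff its copy of F_σ meets L_a. -/
theorem stmt2 (σ : ℕ → Bool) (M N : ℕ) (hN : 1 ≤ N) (hMN : Nat.Coprime M N)
    (n : ℕ) (hn : 1 ≤ n) (w : Fin n → ℤ × ℤ) (hw : ∀ i, w i ∈ DigB (σ i.1)) (a : ℝ) :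
    (PhiComp σ w '' F0set ∩ Lline M N a).Nonempty ↔
      (PhiComp σ w '' FMoran σ ∩ Lline M N a).Nonempty := by
  obtain ⟨a', ha'⟩ := image_line M N σ w a
  rw [ha' F0set, ha' (FMoran σ), F0_iff_FMoran M N σ a']
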